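/- Let X be a linear order on a subset of ℕ and Y a well order on a subset of ℕ. Then both X*Y and ℚ_q*Y are well orders, and |X*Y| ≤ |ℚ_q*Y|. -/

import Mathlib

/-- A tree on ℕ: a set of finite sequences of naturals closed under initial segments. -/
def IsTree (T : Set (List ℕ)) : Prop :=
  ∀ s ∈ T, ∀ t : List ℕ, t <+: s → t ∈ T

/-- `x : ℕ → ℕ` is a branch of `T`: all of its finite initial segments belong to `T`. -/
def IsBranch (T : Set (List ℕ)) (x : ℕ → ℕ) : Prop :=
  ∀ n : ℕ, (List.range n).map x ∈ T

/-- `[T]`, the set of branches of `T`. -/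
def Branches (T : Set (List ℕ)) : Set (ℕ → ℕ) := {x | IsBranch T x}

/-- The Kleene–Brouwer ordering on finite sequences of naturals: `s <_KB t` iff
`t` is a proper initial segment of `s`, or at the first position where `s` and `t`
differ, the entry of `s` is smaller. -/
def KB (s t : List ℕ) : Prop :=
  (t <+: s ∧ t ≠ s) ∨
    ∃ i, i < s.length ∧ i < t.length ∧ (∀ j, j < i → s.getD j 0 = t.getD j 0) ∧
      s.getD i 0 < t.getD i 0

/-- `r` is a strict linear order on the set `X`. -/
def IsLinOrdOn {α : Type*} (X : Set α) (r : α → α → Prop) : Prop :=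
  (∀ a ∈ X, ∀ b ∈ X, ∀ c ∈ X, r a b → r b c → r a c) ∧
  (∀ a ∈ X, ¬r a a) ∧
  (∀ a ∈ X, ∀ b ∈ X, r a b ∨ a = b ∨ r b a)

/-- `r` is a well order on the set `X`: a strict linear order on `X` that is
well-founded on `X`. -/
def IsWellOrdOn {α : Type*} (X : Set α) (r : α → α → Prop) : Prop :=
  IsLinOrdOn X r ∧ WellFounded (Subrel r X)

/-- The double descent tree `T(X,Y)` of two linear orders on subsets of ℕ:
finite sequences of (coded) pairs `(m_i, n_i)` with the `m_i` strictly descending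
in `X` and the `n_i` strictly descending in `Y`.  Pairs are coded by `Nat.pair`. -/
def DDT (X Y : Set ℕ) (rX rY : ℕ → ℕ → Prop) : Set (List ℕ) :=
  {l | (∀ i, i < l.length → (Nat.unpair (l.getD i 0)).1 ∈ X ∧ (Nat.unpair (l.getD i 0)).2 ∈ Y) ∧
       (∀ i, i + 1 < l.length →
         rX (Nat.unpair (l.getD (i + 1) 0)).1 (Nat.unpair (l.getD i 0)).1 ∧
         rY (Nat.unpair (l.getD (i + 1) 0)).2 (Nat.unpair (l.getD i 0)).2)}



lemma getD_of_prefix {u v : List ℕ} (h : u <+: v) {i : ℕ} (hi : i < u.length) :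
    u.getD i 0 = v.getD i 0 := by
  obtain ⟨w, rfl⟩ := h
  rw [List.getD_append _ _ _ _ hi]

lemma prefix_lt_length {u v : List ℕ} (h : u <+: v) (hne : u ≠ v) : u.length < v.length :=
  lt_of_le_of_ne h.length_le (fun hl => hne (h.eq_of_length hl))

lemma prefix_of_agree {u s : List ℕ} (hlen : u.length ≤ s.length)
    (h : ∀ j < u.length, u.getD j 0 = s.getD j 0) : u <+: s := by
  have : u = s.take u.length := by
    apply List.ext_getElem (by simp [hlen])
    intro j h1 h2
    rw [List.getElem_take]
    have := h j h1
    rwa [List.getD_eq_getElem _ _ h1, List.getD_eq_getElem _ _ (lt_of_lt_of_le h1 hlen)] at this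
  exact this ▸ List.take_prefix _ _

lemma kb_irrefl (s : List ℕ) : ¬ KB s s := by
  rintro (⟨_, h⟩ | ⟨i, _, _, _, h⟩)
  · exact h rfl
  · exact lt_irrefl _ h

lemma kb_trans {s t u : List ℕ} (h1 : KB s t) (h2 : KB t u) : KB s u := by
  rcases h1 with ⟨hpre, hne⟩ | ⟨i, his, hit, hagree, hlt⟩
  · rcases h2 with ⟨hpre', hne'⟩ | ⟨i, hit, hiu, hagree', hlt'⟩
    · left
      refine ⟨hpre'.trans hpre, fun hc => ?_⟩
      have := prefix_lt_length hpre hne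
      have := prefix_lt_length hpre' hne'
      subst hc; omega
    · right
      have hts := prefix_lt_length hpre hne
      refine ⟨i, by omega, hiu, fun j hj => ?_, ?_⟩
      · rw [← getD_of_prefix hpre (by omega)]; exact hagree' j hj
      · rw [← getD_of_prefix hpre hit]; exact hlt'
  · rcases h2 with ⟨hpre', hne'⟩ | ⟨i', hit', hiu', hagree', hlt'⟩
    · by_cases hiu : i < u.length
      · right
        refine ⟨i, his, hiu, fun j hj => ?_, ?_⟩
        · rw [hagree j hj, getD_of_prefix hpre' (by omega)]
        · rw [getD_of_prefix hpre' hiu]; exact hlt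
      · left
        push_neg at hiu
        have hul : u.length < s.length := by
          have := prefix_lt_length hpre' hne'
          omega
        refine ⟨prefix_of_agree (by omega) (fun j hj => ?_), fun hc => by subst hc; omega⟩
        rw [getD_of_prefix hpre' hj, ← hagree j (by omega)]
    · rcases lt_trichotomy i i' with hii | rfl | hii
      · right
        refine ⟨i, his, by omega, fun j hj => ?_, ?_⟩
        · rw [hagree j hj]; exact hagree' j (by omega)
        · rw [← hagree' i hii]; exact hlt
      · right
        refine ⟨i, his, hiu', fun j hj => ?_, ?_⟩
        · rw [hagree j hj]; exact hagree' j hj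
        · exact hlt.trans hlt'
      · right
        refine ⟨i', by omega, hiu', fun j hj => ?_, ?_⟩
        · rw [hagree j (by omega)]; exact hagree' j hj
        · rw [hagree i' hii]; exact hlt'

lemma kb_cons (a : ℕ) {s t : List ℕ} (h : KB s t) : KB (a :: s) (a :: t) := by
  rcases h with ⟨hpre, hne⟩ | ⟨i, his, hit, hagree, hlt⟩
  · exact Or.inl ⟨List.cons_prefix_cons.2 ⟨rfl, hpre⟩, fun hc => hne (by injection hc)⟩
  · right
    refine ⟨i + 1, by simpa using his, by simpa using hit, fun j hj => ?_, by simpa using hlt⟩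
    cases j with
    | zero => rfl
    | succ j' => simpa using hagree j' (by omega)

lemma kb_total : ∀ s t : List ℕ, KB s t ∨ s = t ∨ KB t s := by
  intro s
  induction s with
  | nil =>
    intro t
    cases t with
    | nil => exact Or.inr (Or.inl rfl)
    | cons b t' => exact Or.inr (Or.inr (Or.inl ⟨List.nil_prefix, (List.cons_ne_nil _ _).symm⟩))
  | cons a s' ih =>
    intro t
    cases t with
    | nil => exact Or.inl (Or.inl ⟨List.nil_prefix, (List.cons_ne_nil _ _).symm⟩)
    | cons b t' =>
      rcases lt_trichotomy a b with hab | rfl | hab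
      · exact Or.inl (Or.inr ⟨0, by simp, by simp, fun j hj => by omega, by simpa using hab⟩)
      · rcases ih t' with h | rfl | h
        · exact Or.inl (kb_cons a h)
        · exact Or.inr (Or.inl rfl)
        · exact Or.inr (Or.inr (kb_cons a h))
      · exact Or.inr (Or.inr (Or.inr ⟨0, by simp, by simp, fun j hj => by omega, by simpa using hab⟩))


lemma ddt_tree (X Y : Set ℕ) (rX rY : ℕ → ℕ → Prop) {s : List ℕ}
    (hs : s ∈ DDT X Y rX rY) {t : List ℕ} (ht : t <+: s) : t ∈ DDT X Y rX rY := by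
  obtain ⟨h1, h2⟩ := hs
  have hlen := ht.length_le
  constructor
  · intro i hi
    rw [getD_of_prefix ht hi]
    exact h1 i (lt_of_lt_of_le hi hlen)
  · intro i hi
    rw [getD_of_prefix ht hi, getD_of_prefix ht (by omega)]
    exact h2 i (by omega)

lemma kb_chain {s : ℕ → List ℕ} (h : ∀ n, KB (s (n+1)) (s n)) {n m : ℕ} (hnm : n < m) :
    KB (s m) (s n) := by
  induction m, hnm using Nat.le_induction with
  | base => exact h n
  | succ m hm ih => exact kb_trans (h m) ih

lemma snoc_prefix {w l : List ℕ} (h : w <+: l) (hl : w.length < l.length) :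
    w ++ [l.getD w.length 0] <+: l := by
  obtain ⟨v, rfl⟩ := h
  cases v with
  | nil => simp at hl
  | cons x v' =>
    have : (w ++ x :: v').getD w.length 0 = x := by
      rw [List.getD_append_right _ _ _ _ (le_refl _)]
      simp
    rw [this]
    exact ⟨v', by simp⟩

lemma stab (s : ℕ → List ℕ) (hdesc : ∀ n, KB (s (n+1)) (s n)) :
    ∀ k : ℕ, ∃ N : ℕ, ∃ w : List ℕ, w.length = k ∧ ∀ n, N ≤ n → w <+: s n := by
  intro k
  induction k with
  | zero => exact ⟨0, [], rfl, fun n _ => List.nil_prefix⟩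
  | succ k ih =>
    obtain ⟨N, w, hwl, hw⟩ := ih
    have huniq : ∀ n m, n < m → s n = w → s m ≠ w := by
      intro n m hnm h1 h2
      have hc := kb_chain hdesc hnm
      rw [h1, h2] at hc
      exact kb_irrefl w hc
    obtain ⟨N₁, hN₁N, hN₁⟩ : ∃ N₁, N ≤ N₁ ∧ ∀ n, N₁ ≤ n → s n ≠ w := by
      by_cases hex : ∃ n₀, N ≤ n₀ ∧ s n₀ = w
      · obtain ⟨n₀, hn₀, he⟩ := hex
        exact ⟨n₀ + 1, by omega, fun n hn hc => huniq n₀ n (by omega) he hc⟩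
      · exact ⟨N, le_refl N, fun n hn hc => hex ⟨n, hn, hc⟩⟩
    have hlen : ∀ n, N₁ ≤ n → k < (s n).length := by
      intro n hn
      have := prefix_lt_length (hw n (hN₁N.trans hn)) (fun h => hN₁ n hn h.symm)
      omega
    set e : ℕ → ℕ := fun n => (s n).getD k 0 with he
    have hstep : ∀ n, N₁ ≤ n → e (n+1) ≤ e n := by
      intro n hn
      have hp1 : w <+: s n := hw n (hN₁N.trans hn)
      have hp2 : w <+: s (n+1) := hw (n+1) (by omega)
      rcases hdesc n with ⟨hpre, hne⟩ | ⟨i, h1, h2, hagree, hlt⟩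
      · exact le_of_eq (getD_of_prefix hpre (hlen n hn)).symm
      · rcases lt_trichotomy i k with hik | rfl | hki
        · have e1 := getD_of_prefix hp2 (by omega : i < w.length)
          have e2 := getD_of_prefix hp1 (by omega : i < w.length)
          omega
        · exact le_of_lt hlt
        · exact le_of_eq (hagree k hki)
    have hmono : ∀ n m, N₁ ≤ n → n ≤ m → e m ≤ e n := by
      intro n m hn hnm
      induction m, hnm using Nat.le_induction with
      | base => exact le_refl _
      | succ m hm ihm => exact (hstep m (hn.trans hm)).trans ihm
    have hS : {v | ∃ n, N₁ ≤ n ∧ e n = v}.Nonempty := ⟨e N₁, N₁, le_refl _, rfl⟩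
    obtain ⟨N₂, hN₂1, hN₂2⟩ := Nat.sInf_mem hS
    have hconst : ∀ n, N₂ ≤ n → e n = sInf {v | ∃ n, N₁ ≤ n ∧ e n = v} := by
      intro n hn
      exact le_antisymm (hN₂2 ▸ hmono N₂ n hN₂1 hn) (Nat.sInf_le ⟨n, hN₂1.trans hn, rfl⟩)
    refine ⟨N₂, w ++ [sInf {v | ∃ n, N₁ ≤ n ∧ e n = v}], by simp [hwl], fun n hn => ?_⟩
    have hp : w <+: s n := hw n (by omega)
    have hl : w.length < (s n).length := by have := hlen n (hN₂1.trans hn); omega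
    have hgd : (s n).getD w.length 0 = sInf {v | ∃ n, N₁ ≤ n ∧ e n = v} := by
      rw [hwl]; exact hconst n hn
    rw [← hgd]
    exact snoc_prefix hp hl

lemma ddt_no_descent {X Y : Set ℕ} {rX rY : ℕ → ℕ → Prop}
    (hYwf : WellFounded (Subrel rY Y))
    (s : ℕ → List ℕ) (hmem : ∀ n, s n ∈ DDT X Y rX rY)
    (hdesc : ∀ n, KB (s (n+1)) (s n)) : False := by
  choose N W hWl hW using stab s hdesc
  have hWmem : ∀ k, W k ∈ DDT X Y rX rY :=
    fun k => ddt_tree X Y rX rY (hmem (N k)) (hW k (N k) (le_refl _))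
  have hWW : ∀ k, W k <+: W (k+1) := by
    intro k
    have h1 := hW k (max (N k) (N (k+1))) (le_max_left _ _)
    have h2 := hW (k+1) (max (N k) (N (k+1))) (le_max_right _ _)
    exact List.prefix_of_prefix_length_le h1 h2 (by rw [hWl, hWl]; omega)
  set y : ℕ → ℕ := fun k => (Nat.unpair ((W (k+1)).getD k 0)).2 with hy
  have hyY : ∀ k, y k ∈ Y := fun k => ((hWmem (k+1)).1 k (by rw [hWl]; omega)).2
  have hyd : ∀ k, rY (y (k+1)) (y k) := by
    intro k
    have h := ((hWmem (k+2)).2 k (by rw [hWl]; omega)).2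
    have heq : (W (k+2)).getD k 0 = (W (k+1)).getD k 0 :=
      (getD_of_prefix (hWW (k+1)) (by rw [hWl]; omega)).symm
    rw [heq] at h
    exact h
  obtain ⟨m, hm, hmin⟩ := hYwf.has_min (Set.range (fun k => (⟨y k, hyY k⟩ : Y))) ⟨_, ⟨0, rfl⟩⟩
  obtain ⟨k, rfl⟩ := hm
  exact hmin _ ⟨k + 1, rfl⟩ (hyd k)

lemma ddt_wf {Y : Set ℕ} {rY : ℕ → ℕ → Prop} (X : Set ℕ) (rX : ℕ → ℕ → Prop)
    (hYwf : WellFounded (Subrel rY Y)) :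
    WellFounded (Subrel KB (DDT X Y rX rY)) := by
  haveI : IsIrrefl _ (Subrel KB (DDT X Y rX rY)) := ⟨fun a => kb_irrefl a.1⟩
  haveI : IsTrans _ (Subrel KB (DDT X Y rX rY)) := ⟨fun a b c => kb_trans⟩
  haveI : IsStrictOrder _ (Subrel KB (DDT X Y rX rY)) := ⟨⟩
  rw [RelEmbedding.wellFounded_iff_isEmpty]
  refine ⟨fun f => ?_⟩
  exact ddt_no_descent hYwf (fun n => (f n).1) (fun n => (f n).2)
    (fun n => f.map_rel_iff.2 (Nat.lt_succ_self n))

noncomputable def childAux (S : Set ℕ) (c : ℕ) : ℕ :=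
  sInf {a | a ∈ S ∧ ∀ c' : Fin c,
    Nat.pair (childAux S c'.1) (Nat.unpair c'.1).2 < Nat.pair a (Nat.unpair c).2}
termination_by c
decreasing_by exact c'.2

lemma childAux_spec {S : Set ℕ} (hS : ∀ M, ∃ a ∈ S, M < a) (c : ℕ) :
    childAux S c ∈ S ∧
      ∀ c' < c, Nat.pair (childAux S c') (Nat.unpair c').2 <
        Nat.pair (childAux S c) (Nat.unpair c).2 := by
  have hne : {a | a ∈ S ∧ ∀ c' : Fin c,
      Nat.pair (childAux S c'.1) (Nat.unpair c'.1).2 < Nat.pair a (Nat.unpair c).2}.Nonempty := by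
    obtain ⟨a, haS, ha⟩ :=
      hS ((Finset.range c).sup fun c' => Nat.pair (childAux S c') (Nat.unpair c').2)
    refine ⟨a, haS, fun c' => ?_⟩
    have h1 : Nat.pair (childAux S c'.1) (Nat.unpair c'.1).2 ≤
        (Finset.range c).sup fun c' => Nat.pair (childAux S c') (Nat.unpair c').2 :=
      Finset.le_sup (f := fun c' => Nat.pair (childAux S c') (Nat.unpair c').2)
        (Finset.mem_range.2 c'.2)
    have h2 := Nat.left_le_pair a (Nat.unpair c).2
    omega
  have key : childAux S c ∈ {a | a ∈ S ∧ ∀ c' : Fin c,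
      Nat.pair (childAux S c'.1) (Nat.unpair c'.1).2 < Nat.pair a (Nat.unpair c).2} := by
    rw [childAux]
    exact Nat.sInf_mem hne
  exact ⟨key.1, fun c' hc' => key.2 ⟨c', hc'⟩⟩

def Sset (q : ℕ → ℚ) : List ℕ → Set ℕ
  | [] => Set.univ
  | d :: _ => {a | q a < q (Nat.unpair d).1}

lemma Sset_unbounded (q : ℕ → ℚ) (hq : Function.Bijective q) (t : List ℕ) :
    ∀ M, ∃ a ∈ Sset q t, M < a := by
  intro M
  cases t with
  | nil => exact ⟨M + 1, Set.mem_univ _, by omega⟩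
  | cons d t' =>
    set r := q (Nat.unpair d).1 with hr
    set e := Equiv.ofBijective q hq with he
    have hinj : Function.Injective (fun n : ℕ => e.symm (r - ((n : ℚ) + 1))) := by
      intro n m hnm
      have h := congrArg e hnm
      simp only [Equiv.apply_symm_apply] at h
      have h2 : (n : ℚ) = m := by linarith
      exact_mod_cast h2
    have hmem : ∀ n : ℕ, e.symm (r - ((n : ℚ) + 1)) ∈ {a | q a < r} := by
      intro n
      have h : q (e.symm (r - ((n : ℚ) + 1))) = r - ((n : ℚ) + 1) := e.apply_symm_apply _
      simp only [Set.mem_setOf_eq, h]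
      have : (0 : ℚ) < (n : ℚ) + 1 := by positivity
      linarith
    have hinf : {a | q a < r}.Infinite :=
      Set.infinite_of_injective_forall_mem hinj hmem
    obtain ⟨b, hb1, hb2⟩ := hinf.exists_gt M
    exact ⟨b, hb1, hb2⟩

noncomputable def newc (q : ℕ → ℚ) (t : List ℕ) (c : ℕ) : ℕ :=
  Nat.pair (childAux (Sset q t) c) (Nat.unpair c).2

noncomputable def Gmap (q : ℕ → ℚ) : List ℕ → List ℕ
  | [] => []
  | c :: l => newc q (Gmap q l) c :: Gmap q l

noncomputable def Fmap (q : ℕ → ℚ) (s : List ℕ) : List ℕ := (Gmap q s.reverse).reverse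

lemma gmap_length (q : ℕ → ℚ) : ∀ r : List ℕ, (Gmap q r).length = r.length := by
  intro r
  induction r with
  | nil => rfl
  | cons c l ih => simp [Gmap, ih]

lemma fmap_length (q : ℕ → ℚ) (s : List ℕ) : (Fmap q s).length = s.length := by
  simp [Fmap, gmap_length]

lemma gmap_append (q : ℕ → ℚ) : ∀ r r' : List ℕ, ∃ u, Gmap q (r ++ r') = u ++ Gmap q r' := by
  intro r r'
  induction r with
  | nil => exact ⟨[], rfl⟩
  | cons c l ih =>
    obtain ⟨u, hu⟩ := ih
    exact ⟨newc q (Gmap q (l ++ r')) c :: u, by simp [Gmap, hu]⟩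

lemma fmap_prefix (q : ℕ → ℚ) {t s : List ℕ} (h : t <+: s) : Fmap q t <+: Fmap q s := by
  obtain ⟨v, rfl⟩ := h
  obtain ⟨u, hu⟩ := gmap_append q v.reverse t.reverse
  refine ⟨u.reverse, ?_⟩
  simp only [Fmap, List.reverse_append, hu]

lemma fmap_snoc (q : ℕ → ℚ) (s : List ℕ) (c : ℕ) :
    Fmap q (s ++ [c]) = Fmap q s ++ [newc q (Gmap q s.reverse) c] := by
  simp [Fmap, Gmap, List.reverse_append]

lemma take_succ_eq {s : List ℕ} {i : ℕ} (hi : i < s.length) :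
    s.take (i + 1) = s.take i ++ [s.getD i 0] := by
  rw [List.take_succ, List.getElem?_eq_getElem hi, List.getD_eq_getElem _ _ hi]
  rfl

lemma fmap_getD (q : ℕ → ℚ) {s : List ℕ} {i : ℕ} (hi : i < s.length) :
    (Fmap q s).getD i 0 = newc q (Gmap q (s.take i).reverse) (s.getD i 0) := by
  have h2 : Fmap q (s.take (i+1)) =
      Fmap q (s.take i) ++ [newc q (Gmap q (s.take i).reverse) (s.getD i 0)] := by
    rw [take_succ_eq hi, fmap_snoc]
  have hlen : (Fmap q (s.take i)).length = i := by
    rw [fmap_length, List.length_take]; omega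
  have hlen1 : (Fmap q (s.take (i+1))).length = i + 1 := by
    rw [fmap_length, List.length_take]; omega
  have h3 : Fmap q (s.take (i+1)) <+: Fmap q s := fmap_prefix q (List.take_prefix _ _)
  rw [← getD_of_prefix h3 (by omega), h2, List.getD_append_right _ _ _ _ (by omega)]
  rw [hlen]
  simp

lemma take_eq_of_agree {s t : List ℕ} {i : ℕ} (hs : i ≤ s.length) (ht : i ≤ t.length)
    (h : ∀ j < i, s.getD j 0 = t.getD j 0) : s.take i = t.take i := by
  apply List.ext_getElem (by simp; omega)
  intro j h1 h2
  rw [List.getElem_take, List.getElem_take]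
  have hj : j < i := by simp at h1; omega
  have := h j hj
  rwa [List.getD_eq_getElem s _ (by omega), List.getD_eq_getElem t _ (by omega)] at this

lemma fmap_mem (q : ℕ → ℚ) (hq : Function.Bijective q) {X Y : Set ℕ} {rX rY : ℕ → ℕ → Prop}
    {s : List ℕ} (hs : s ∈ DDT X Y rX rY) :
    Fmap q s ∈ DDT Set.univ Y (fun m n => q m < q n) rY := by
  obtain ⟨h1, h2⟩ := hs
  constructor
  · intro i hi
    rw [fmap_length] at hi
    rw [fmap_getD q hi]
    simp only [newc, Nat.unpair_pair]
    exact ⟨Set.mem_univ _, (h1 i hi).2⟩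
  · intro i hi
    rw [fmap_length] at hi
    have hi1 : i < s.length := by omega
    rw [fmap_getD q hi, fmap_getD q hi1]
    simp only [newc, Nat.unpair_pair]
    constructor
    · -- q-descent
      have hrev : (s.take (i+1)).reverse = s.getD i 0 :: (s.take i).reverse := by
        rw [take_succ_eq hi1]; simp
      rw [hrev]
      have h3 := (childAux_spec (Sset_unbounded q hq
        (Gmap q (s.getD i 0 :: (s.take i).reverse))) (s.getD (i+1) 0)).1
      simp only [Gmap, Sset, newc, Nat.unpair_pair, Set.mem_setOf_eq] at h3 ⊢
      exact h3
    · exact (h2 i hi).2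

lemma fmap_kb (q : ℕ → ℚ) (hq : Function.Bijective q) {s t : List ℕ} (h : KB s t) :
    KB (Fmap q s) (Fmap q t) := by
  rcases h with ⟨hpre, hne⟩ | ⟨i, hi1, hi2, hagree, hlt⟩
  · left
    refine ⟨fmap_prefix q hpre, fun hc => ?_⟩
    have hl := prefix_lt_length hpre hne
    have := congrArg List.length hc
    rw [fmap_length, fmap_length] at this
    omega
  · right
    have htake : s.take i = t.take i :=
      take_eq_of_agree (le_of_lt hi1) (le_of_lt hi2) hagree
    refine ⟨i, by rw [fmap_length]; exact hi1, by rw [fmap_length]; exact hi2,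
      fun j hj => ?_, ?_⟩
    · have hp1 : Fmap q (s.take i) <+: Fmap q s := fmap_prefix q (List.take_prefix _ _)
      have hp2 : Fmap q (t.take i) <+: Fmap q t := fmap_prefix q (List.take_prefix _ _)
      have hlen1 : (Fmap q (s.take i)).length = i := by
        rw [fmap_length, List.length_take]; omega
      have hlen2 : (Fmap q (t.take i)).length = i := by
        rw [fmap_length, List.length_take]; omega
      rw [← getD_of_prefix hp1 (by omega), ← getD_of_prefix hp2 (by omega), htake]
    · rw [fmap_getD q hi1, fmap_getD q hi2, htake]
      exact (childAux_spec (Sset_unbounded q hq (Gmap q (t.take i).reverse))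
        (t.getD i 0)).2 (s.getD i 0) hlt

lemma kb_linOrdOn (D : Set (List ℕ)) : (∀ a ∈ D, ∀ b ∈ D, ∀ c ∈ D, KB a b → KB b c → KB a c) ∧
    (∀ a ∈ D, ¬KB a a) ∧ (∀ a ∈ D, ∀ b ∈ D, KB a b ∨ a = b ∨ KB b a) :=
  ⟨fun a _ b _ c _ => kb_trans, fun a _ => kb_irrefl a, fun a _ b _ => kb_total a b⟩

/-- If `X` is a linear order and `Y` a well order (on subsets of ℕ),
then `X*Y` and `ℚ_q*Y` are well orders, and `|X*Y| ≤ |ℚ_q*Y|`: there is an order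
embedding of the former Kleene–Brouwer order into the latter.  Here `ℚ_q` is the
linear order on ℕ induced by a fixed bijection `q : ℕ → ℚ`. -/
theorem star_le_rat_star (q : ℕ → ℚ) (hq : Function.Bijective q)
    (X Y : Set ℕ) (rX rY : ℕ → ℕ → Prop)
    (hX : IsLinOrdOn X rX) (hY : IsWellOrdOn Y rY) :
    IsWellOrdOn (DDT X Y rX rY) KB ∧
    IsWellOrdOn (DDT Set.univ Y (fun m n => q m < q n) rY) KB ∧
    Nonempty (Subrel KB (DDT X Y rX rY) ↪r
      Subrel KB (DDT Set.univ Y (fun m n => q m < q n) rY)) := by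
  obtain ⟨hYlin, hYwf⟩ := hY
  refine ⟨⟨kb_linOrdOn _, ddt_wf X rX hYwf⟩,
    ⟨kb_linOrdOn _, ddt_wf Set.univ (fun m n => q m < q n) hYwf⟩, ?_⟩
  haveI : IsTrichotomous (↥(DDT X Y rX rY)) (Subrel KB (DDT X Y rX rY)) := by
    refine ⟨fun a b => ?_⟩
    rcases kb_total a.1 b.1 with h | h | h
    · exact fun h1 _ => absurd h h1
    · exact fun _ _ => Subtype.ext h
    · exact fun _ h2 => absurd h h2
  haveI : IsAsymm (↥(DDT Set.univ Y (fun m n => q m < q n) rY))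
      (Subrel KB (DDT Set.univ Y (fun m n => q m < q n) rY)) :=
    ⟨fun a _ h1 h2 => kb_irrefl a.1 (kb_trans h1 h2)⟩
  exact ⟨RelEmbedding.ofMonotone
    (fun l => ⟨Fmap q l.1, fmap_mem q hq l.2⟩)
    (fun a b hab => fmap_kb q hq hab)⟩
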